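/- Independence/product rule for disjunction: for formulas α and β, μ(α ∨ β) = 1 − (1 − μ(α))·(1 − μ(β)), i.e., μ(α∨β) = μ(α) + μ(β) − μ(α)·μ(β). -/

import Mathlib

/-- Propositional formulas built from atoms via ¬, ∨, →. -/
inductive Formula (A : Type) : Type
  | atom : A → Formula A
  | neg  : Formula A → Formula A
  | orr  : Formula A → Formula A → Formula A
  | imp  : Formula A → Formula A → Formula A
deriving DecidableEq

/-- Well-formed sequences over a collection `V` of truth valuations. -/
inductive WFS (V : Type) : Type
  | leaf : V → WFS V
  | pair : WFS V → WFS V → WFS V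
deriving DecidableEq

/-- Association between a WFS and a formula. -/
def Assoc {V A : Type} : WFS V → Formula A → Prop
  | WFS.leaf _, Formula.atom _ => True
  | s, Formula.neg β => Assoc s β
  | WFS.pair s₁ s₂, Formula.orr α β => Assoc s₁ α ∧ Assoc s₂ β
  | WFS.pair s₁ s₂, Formula.imp α β => Assoc s₁ α ∧ Assoc s₂ β
  | _, _ => False

/-- Justification of a formula by a WFS (PML semantics). -/
def Justif {V A : Type} (val : V → A → Bool) : WFS V → Formula A → Prop
  | WFS.leaf v, Formula.atom a => val v a = true
  | s, Formula.neg β => ¬ Justif val s β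
  | WFS.pair s₁ s₂, Formula.orr α β => Justif val s₁ α ∨ Justif val s₂ β
  | WFS.pair s₁ s₂, Formula.imp α β => ¬ Justif val s₁ α ∨ Justif val s₂ β
  | _, _ => False

/-- Multiplicative weight allotment extending a basic weight distribution. -/
def weight {V : Type} (pbar : V → ℝ) : WFS V → ℝ
  | WFS.leaf v => pbar v
  | WFS.pair s₁ s₂ => weight pbar s₁ * weight pbar s₂

/-- The (finite) set of WFS associated to a formula. -/
def assocSeqs {V A : Type} [Fintype V] [DecidableEq V] : Formula A → Finset (WFS V)
  | Formula.atom _ => Finset.univ.image WFS.leaf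
  | Formula.neg β => assocSeqs β
  | Formula.orr α β => (assocSeqs α ×ˢ assocSeqs β).image fun q => WFS.pair q.1 q.2
  | Formula.imp α β => (assocSeqs α ×ˢ assocSeqs β).image fun q => WFS.pair q.1 q.2

-- The logical measure of a formula: total weight of associated justifying sequences.
open scoped Classical in
noncomputable def mu {V A : Type} [Fintype V] [DecidableEq V]
    (pbar : V → ℝ) (val : V → A → Bool) (φ : Formula A) : ℝ :=
  ∑ s ∈ (assocSeqs φ).filter (fun s => Justif val s φ), weight pbar s

/-- Derived conjunction: α ∧ β := ¬(¬α ∨ ¬β). -/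
def Formula.conj {A : Type} (α β : Formula A) : Formula A :=
  Formula.neg (Formula.orr (Formula.neg α) (Formula.neg β))

/-- Classical Boolean semantics. -/
def evalF {A : Type} (v : A → Bool) : Formula A → Bool
  | Formula.atom a => v a
  | Formula.neg α => !(evalF v α)
  | Formula.orr α β => evalF v α || evalF v β
  | Formula.imp α β => !(evalF v α) || evalF v β

/-- Diagonal sequence: the valuation `v` at every leaf position of a formula. -/
def diag {V A : Type} (v : V) : Formula A → WFS V
  | Formula.atom _ => WFS.leaf v
  | Formula.neg α => diag v α
  | Formula.orr α β => WFS.pair (diag v α) (diag v β)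
  | Formula.imp α β => WFS.pair (diag v α) (diag v β)

/-- Number of atom occurrences in a formula. -/
def numAtoms {A : Type} : Formula A → ℕ
  | Formula.atom _ => 1
  | Formula.neg α => numAtoms α
  | Formula.orr α β => numAtoms α + numAtoms β
  | Formula.imp α β => numAtoms α + numAtoms β

lemma pair_inj_on {V A : Type} [Fintype V] [DecidableEq V] (α β : Formula A) :
    ∀ x ∈ (assocSeqs α ×ˢ assocSeqs β : Finset (WFS V × WFS V)),
      ∀ y ∈ (assocSeqs α ×ˢ assocSeqs β : Finset (WFS V × WFS V)),
      (fun q : WFS V × WFS V => WFS.pair q.1 q.2) x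
        = (fun q : WFS V × WFS V => WFS.pair q.1 q.2) y → x = y := by
  rintro ⟨a, b⟩ _ ⟨c, d⟩ _ h
  simp_all

lemma wsum {V A : Type} [Fintype V] [DecidableEq V] (pbar : V → ℝ)
    (hsum : ∑ v, pbar v = 1) :
    ∀ φ : Formula A, ∑ s ∈ (assocSeqs φ : Finset (WFS V)), weight pbar s = 1
  | Formula.atom a => by
      rw [assocSeqs, Finset.sum_image (by intro x _ y _ h; simpa using h)]
      simpa [weight] using hsum
  | Formula.neg φ => wsum pbar hsum φ
  | Formula.orr φ ψ => by
      rw [assocSeqs, Finset.sum_image (pair_inj_on φ ψ)]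
      have : ∀ q ∈ (assocSeqs φ ×ˢ assocSeqs ψ : Finset (WFS V × WFS V)),
          weight pbar (WFS.pair q.1 q.2) = weight pbar q.1 * weight pbar q.2 := by
        intro q _; rfl
      rw [Finset.sum_congr rfl this, Finset.sum_product, ← Finset.sum_mul_sum,
        wsum pbar hsum φ, wsum pbar hsum ψ, one_mul]
  | Formula.imp φ ψ => by
      rw [assocSeqs, Finset.sum_image (pair_inj_on φ ψ)]
      have : ∀ q ∈ (assocSeqs φ ×ˢ assocSeqs ψ : Finset (WFS V × WFS V)),
          weight pbar (WFS.pair q.1 q.2) = weight pbar q.1 * weight pbar q.2 := by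
        intro q _; rfl
      rw [Finset.sum_congr rfl this, Finset.sum_product, ← Finset.sum_mul_sum,
        wsum pbar hsum φ, wsum pbar hsum ψ, one_mul]

/-- product rule for disjunction. -/
theorem stmt12 {V A : Type} [Fintype V] [DecidableEq V] (pbar : V → ℝ)
    (val : V → A → Bool)
    (hnn : ∀ v, 0 ≤ pbar v) (hsum : ∑ v, pbar v = 1) (α β : Formula A) :
    mu pbar val (Formula.orr α β)
      = 1 - (1 - mu pbar val α) * (1 - mu pbar val β) ∧
    mu pbar val (Formula.orr α β)
      = mu pbar val α + mu pbar val β - mu pbar val α * mu pbar val β := by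
  classical
  have key : mu pbar val (Formula.orr α β)
      = 1 - (1 - mu pbar val α) * (1 - mu pbar val β) := by
    have hμ : ∀ φ : Formula A,
        1 - mu pbar val φ
          = ∑ s ∈ (assocSeqs φ : Finset (WFS V)).filter
              (fun s => ¬ Justif val s φ), weight pbar s := by
      intro φ
      have := Finset.sum_filter_add_sum_filter_not (assocSeqs φ : Finset (WFS V))
        (fun s => Justif val s φ) (weight pbar)
      rw [wsum pbar hsum φ] at this
      have hmu : mu pbar val φ
          = ∑ s ∈ (assocSeqs φ : Finset (WFS V)).filter
              (fun s => Justif val s φ), weight pbar s := by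
        rw [mu]
      linarith
    -- rewrite mu of orr as a sum over the product
    have hrw : mu pbar val (Formula.orr α β)
        = ∑ q ∈ (assocSeqs α ×ˢ assocSeqs β : Finset (WFS V × WFS V)),
            (if Justif val q.1 α ∨ Justif val q.2 β then
              weight pbar q.1 * weight pbar q.2 else 0) := by
      rw [mu, Finset.sum_filter]
      rw [show (assocSeqs (Formula.orr α β) : Finset (WFS V))
          = (assocSeqs α ×ˢ assocSeqs β).image
              (fun q : WFS V × WFS V => WFS.pair q.1 q.2) from rfl]
      rw [Finset.sum_image (pair_inj_on α β)]
      apply Finset.sum_congr rfl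
      intro q _
      simp only [weight, Justif]
      congr 1
    have hsplit : ∀ q : WFS V × WFS V,
        (if Justif val q.1 α ∨ Justif val q.2 β then
            weight pbar q.1 * weight pbar q.2 else 0)
          = weight pbar q.1 * weight pbar q.2
            - (if ¬ Justif val q.1 α then weight pbar q.1 else 0)
              * (if ¬ Justif val q.2 β then weight pbar q.2 else 0) := by
      intro q
      by_cases h1 : Justif val q.1 α <;> by_cases h2 : Justif val q.2 β <;>
        simp [h1, h2]
    rw [hrw, Finset.sum_congr rfl (fun q _ => hsplit q), Finset.sum_sub_distrib,
      Finset.sum_product, Finset.sum_product, ← Finset.sum_mul_sum,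
      wsum pbar hsum α, wsum pbar hsum β, one_mul, hμ α, hμ β,
      Finset.sum_mul_sum]
    congr 1
    rw [Finset.sum_filter]
    refine Finset.sum_congr rfl fun x _ => ?_
    by_cases hx : Justif val x α <;>
      simp [hx, Finset.sum_filter, Finset.mul_sum]
  refine ⟨key, ?_⟩
  rw [key]; ring
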